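/- arXiv:1503.06716 — 2 statements merged into one kernel-verified Lean document; each statement's English description precedes it below -/
import Mathlib

section
/- For every Hurst index H in the open interval (0,1), the improper integral ∫₀^∞ (1 − cos t) · t^{−2H−1} dt converges and equals π / (4·H·Γ(2H)·sin(πH)); equivalently, it equals γ(H)/2 where γ(H) := π / (2·H·Γ(2H)·sin(Hπ)) is the normalizing constant appearing in the variogram formula of the fractional Brownian field. -/
open MeasureTheory Real Set Filter


lemma aux_meas (c : ℝ) : Measurable (fun t : ℝ => (1 - Real.cos t) * t ^ c) := by fun_prop

lemma aux_integrable {H : ℝ} (h0 : 0 < H) (h1 : H < 1) :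
    IntegrableOn (fun t : ℝ => (1 - Real.cos t) * t ^ (-2 * H - 1)) (Set.Ioi 0) volume := by
  rw [← Set.Ioc_union_Ioi_eq_Ioi (zero_le_one)]
  apply MeasureTheory.IntegrableOn.union
  · -- on Ioc 0 1
    have hg : IntegrableOn (fun t : ℝ => t ^ (1 - 2 * H) / 2) (Set.Ioc (0:ℝ) 1) volume := by
      have := (intervalIntegral.intervalIntegrable_rpow' (a := 0) (b := 1)
        (r := 1 - 2*H) (by linarith)).div_const 2
      rwa [intervalIntegrable_iff_integrableOn_Ioc_of_le zero_le_one] at this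
    refine hg.mono' (aux_meas _).aestronglyMeasurable ?_
    filter_upwards [ae_restrict_mem measurableSet_Ioc] with t ht
    have ht0 : 0 < t := ht.1
    have h1c : 0 ≤ 1 - Real.cos t := by nlinarith [Real.cos_le_one t]
    rw [Real.norm_eq_abs, abs_of_nonneg (by positivity)]
    have hb : 1 - Real.cos t ≤ t ^ 2 / 2 := by nlinarith [Real.one_sub_sq_div_two_le_cos (x := t)]
    have hp : (0:ℝ) ≤ t ^ (-2 * H - 1) := by positivity
    calc (1 - Real.cos t) * t ^ (-2 * H - 1) ≤ t ^ 2 / 2 * t ^ (-2 * H - 1) := by gcongr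
      _ = t ^ (1 - 2 * H) / 2 := by
          rw [div_mul_eq_mul_div, ← Real.rpow_natCast t 2, ← Real.rpow_add ht0]
          norm_num
          rw [show (2:ℝ) + (-(2 * H) - 1) = 1 - 2*H by ring]
  · -- on Ioi 1
    have hg : IntegrableOn (fun t : ℝ => 2 * t ^ (-2 * H - 1)) (Set.Ioi (1:ℝ)) volume :=
      (integrableOn_Ioi_rpow_of_lt (by linarith) zero_lt_one).const_mul 2
    refine hg.mono' (aux_meas _).aestronglyMeasurable ?_
    filter_upwards [ae_restrict_mem measurableSet_Ioi] with t ht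
    have ht0 : (0:ℝ) < t := lt_trans zero_lt_one ht
    have h1c : 0 ≤ 1 - Real.cos t := by nlinarith [Real.cos_le_one t]
    rw [Real.norm_eq_abs, abs_of_nonneg (by positivity)]
    have hb : 1 - Real.cos t ≤ 2 := by nlinarith [Real.neg_one_le_cos t]
    have hp : (0:ℝ) ≤ t ^ (-2 * H - 1) := by positivity
    gcongr

lemma laplace_integrable {x : ℝ} (hx : 0 < x) :
    IntegrableOn (fun t : ℝ => (1 - Real.cos t) * rexp (-(t * x))) (Set.Ioi 0) volume := by
  have hg : IntegrableOn (fun t : ℝ => 2 * rexp (-x * t)) (Set.Ioi (0:ℝ)) volume :=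
    (exp_neg_integrableOn_Ioi 0 hx).const_mul 2
  refine hg.mono' (Measurable.aestronglyMeasurable (by measurability)) ?_
  filter_upwards [ae_restrict_mem measurableSet_Ioi] with t _
  have h1c : 0 ≤ 1 - Real.cos t := by nlinarith [Real.cos_le_one t]
  rw [Real.norm_eq_abs, abs_of_nonneg (by positivity)]
  rw [show -(t*x) = -x*t by ring]
  have hb : 1 - Real.cos t ≤ 2 := by nlinarith [Real.neg_one_le_cos t]
  have : (0:ℝ) < rexp (-x * t) := Real.exp_pos _
  nlinarith

lemma laplace_value {x : ℝ} (hx : 0 < x) :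
    ∫ t in Set.Ioi (0:ℝ), (1 - Real.cos t) * rexp (-(t * x)) = 1 / (x * (1 + x ^ 2)) := by
  set F : ℝ → ℝ := fun t =>
    -rexp (-(t * x)) / x - rexp (-(t * x)) * (Real.sin t - x * Real.cos t) / (1 + x ^ 2) with hF
  have hx2 : (0:ℝ) < 1 + x ^ 2 := by positivity
  have hderiv : ∀ t ∈ Set.Ici (0:ℝ), HasDerivAt F ((1 - Real.cos t) * rexp (-(t * x))) t := by
    intro t _
    have he : HasDerivAt (fun t : ℝ => rexp (-(t * x))) (-x * rexp (-(t * x))) t := by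
      have h1 : HasDerivAt (fun t : ℝ => -(t * x)) (-x) t := by
        exact (((hasDerivAt_id t).mul_const x).neg).congr_deriv (by simp)
      simpa [mul_comm] using h1.exp
    have hs : HasDerivAt (fun t : ℝ => Real.sin t - x * Real.cos t)
        (Real.cos t + x * Real.sin t) t := by
      exact ((Real.hasDerivAt_sin t).sub ((Real.hasDerivAt_cos t).const_mul x)).congr_deriv (by ring)
    have hd : HasDerivAt F
        (-(-x * rexp (-(t * x))) / x -
          ((-x * rexp (-(t * x))) * (Real.sin t - x * Real.cos t) +
            rexp (-(t * x)) * (Real.cos t + x * Real.sin t)) / (1 + x ^ 2)) t :=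
      ((he.neg.div_const x)).sub ((he.mul hs).div_const (1 + x ^ 2))
    convert hd using 1
    field_simp
    ring
  have htend : Tendsto F atTop (nhds 0) := by
    have he : Tendsto (fun t : ℝ => rexp (-(t * x))) atTop (nhds 0) := by
      have : Tendsto (fun t : ℝ => t * x) atTop atTop := Tendsto.atTop_mul_const hx tendsto_id
      simpa [Function.comp_def] using Real.tendsto_exp_neg_atTop_nhds_zero.comp this
    have h1 : Tendsto (fun t : ℝ => -rexp (-(t * x)) / x) atTop (nhds 0) := by
      simpa using (he.neg.div_const x)
    have h2 : Tendsto (fun t : ℝ =>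
        rexp (-(t * x)) * (Real.sin t - x * Real.cos t) / (1 + x ^ 2)) atTop (nhds 0) := by
      apply squeeze_zero_norm (a := fun t => rexp (-(t * x)) * (1 + x) / (1 + x ^ 2))
      · intro t
        rw [Real.norm_eq_abs, abs_div, abs_of_pos hx2, abs_mul,
          abs_of_pos (Real.exp_pos _)]
        have : |Real.sin t - x * Real.cos t| ≤ 1 + x := by
          calc |Real.sin t - x * Real.cos t| ≤ |Real.sin t| + |x * Real.cos t| := abs_sub _ _
            _ ≤ 1 + x := by
                rw [abs_mul, abs_of_pos hx]
                have := Real.abs_sin_le_one t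
                have := Real.abs_cos_le_one t
                nlinarith
        gcongr
      · simpa using ((he.mul_const (1 + x)).div_const (1 + x ^ 2))
    simpa using h1.sub h2
  have := integral_Ioi_of_hasDerivAt_of_tendsto' hderiv (laplace_integrable hx) htend
  rw [this, hF]
  simp only [zero_mul, neg_zero, Real.exp_zero, Real.sin_zero, Real.cos_zero]
  field_simp
  ring

lemma J_value {H : ℝ} (h0 : 0 < H) (h1 : H < 1) :
    ∫ x in Set.Ioi (0:ℝ), x ^ (2*H - 1) * (1 + x ^ 2)⁻¹
      = Real.Gamma H * Real.Gamma (1 - H) / 2 := by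
  set μ := volume.restrict (Set.Ioi (0:ℝ)) with hμ
  set g : ℝ → ℝ → ℝ := fun y x => rexp (-y) * (x ^ (2*H-1) * rexp (-(y * x ^ (2:ℝ)))) with hg
  -- sections integrable
  have h_sect : ∀ y : ℝ, 0 < y → Integrable (fun x => g y x) μ := by
    intro y hy
    have := (integrableOn_rpow_mul_exp_neg_mul_rpow
      (show (-1:ℝ) < 2*H-1 by linarith) two_pos hy).const_mul (rexp (-y))
    simpa [hg, neg_mul, mul_assoc] using this
  -- inner integral value
  have h_inner : ∀ y : ℝ, 0 < y →
      ∫ x, g y x ∂μ = rexp (-y) * y ^ (-H) * ((1/2) * Real.Gamma H) := by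
    intro y hy
    have hint := integral_rpow_mul_exp_neg_mul_rpow (show (0:ℝ) < 2 by norm_num)
      (show (-1:ℝ) < 2*H-1 by linarith) hy
    simp only [neg_mul] at hint
    rw [hg]
    simp only
    rw [MeasureTheory.integral_const_mul, hμ, hint,
      show (-(2*H-1+1)/2 : ℝ) = -H by ring, show ((2*H-1+1)/2 : ℝ) = H by ring]
    ring
  -- norm-integral function integrable
  have base : IntegrableOn (fun y : ℝ => rexp (-y) * y ^ (-H)) (Set.Ioi 0) volume := by
    have := Real.GammaIntegral_convergent (show 0 < 1-H by linarith)
    simpa [show (1:ℝ)-H-1 = -H by ring] using this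
  have h_norm_int : Integrable (fun y => ∫ x, ‖g y x‖ ∂μ) μ := by
    refine ((base.mul_const ((1/2) * Real.Gamma H)).congr ?_)
    rw [hμ]
    filter_upwards [ae_restrict_mem measurableSet_Ioi] with y hy
    have h1 : ∫ x, ‖g y x‖ ∂μ = ∫ x, g y x ∂μ := by
      rw [hμ]
      refine setIntegral_congr_fun measurableSet_Ioi (fun x hx => ?_)
      have hx0 : (0:ℝ) < x := hx
      exact Real.norm_of_nonneg (by positivity)
    rw [h1, h_inner y hy]
  -- product integrability
  have hmeas : AEStronglyMeasurable (Function.uncurry g) (μ.prod μ) := by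
    apply Measurable.aestronglyMeasurable
    apply Measurable.mul (by fun_prop)
    apply Measurable.mul (by fun_prop)
    apply Real.measurable_exp.comp
    apply Measurable.neg
    exact (measurable_fst.mul (by fun_prop))
  have hprod : Integrable (Function.uncurry g) (μ.prod μ) := by
    rw [MeasureTheory.integrable_prod_iff hmeas]
    constructor
    · rw [hμ]
      filter_upwards [ae_restrict_mem measurableSet_Ioi] with y hy
      exact h_sect y hy
    · exact h_norm_int
  -- swap
  have hswap := MeasureTheory.integral_integral_swap hprod
  -- LHS value
  have hL : ∫ y, ∫ x, g y x ∂μ ∂μ = Real.Gamma H * Real.Gamma (1 - H) / 2 := by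
    rw [hμ]
    rw [setIntegral_congr_fun measurableSet_Ioi (fun y hy => h_inner y hy)]
    have hGamma : ∫ y in Set.Ioi (0:ℝ), rexp (-y) * y ^ (-H) = Real.Gamma (1 - H) := by
      rw [Real.Gamma_eq_integral (show 0 < 1-H by linarith)]
      simp only [show (1:ℝ)-H-1 = -H from by ring]
    rw [MeasureTheory.integral_mul_const, hGamma]
    ring
  -- RHS inner value
  have h_inner2 : ∀ x : ℝ, 0 < x →
      ∫ y, g y x ∂μ = x ^ (2*H-1) * (1 + x ^ 2)⁻¹ := by
    intro x hx
    have hr : (0:ℝ) < 1 + x ^ (2:ℝ) := by positivity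
    have hint := integral_rpow_mul_exp_neg_mul_Ioi (show (0:ℝ) < 1 by norm_num) hr
    simp only [sub_self, Real.rpow_zero, one_mul, Real.rpow_one, Real.Gamma_one, mul_one] at hint
    have hcong : ∀ y : ℝ, g y x = x ^ (2*H-1) * rexp (-((1 + x ^ (2:ℝ)) * y)) := by
      intro y
      rw [hg]
      simp only
      rw [show rexp (-y) * (x ^ (2*H-1) * rexp (-(y * x ^ (2:ℝ)))) =
        x ^ (2*H-1) * (rexp (-y) * rexp (-(y * x ^ (2:ℝ)))) from by ring, ← Real.exp_add]
      congr 2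
      ring
    rw [hμ]
    calc ∫ y in Set.Ioi (0:ℝ), g y x
        = ∫ y in Set.Ioi (0:ℝ), x ^ (2*H-1) * rexp (-((1 + x ^ (2:ℝ)) * y)) := by
          exact setIntegral_congr_fun measurableSet_Ioi (fun y _ => hcong y)
      _ = x ^ (2*H-1) * (1 + x ^ 2)⁻¹ := by
          rw [MeasureTheory.integral_const_mul, hint]
          rw [show x ^ (2:ℝ) = x ^ (2:ℕ) by
            rw [← Real.rpow_natCast x 2]; norm_num]
          rw [one_div]
  -- conclude
  have hR : ∫ x, ∫ y, g y x ∂μ ∂μ = ∫ x in Set.Ioi (0:ℝ), x ^ (2*H - 1) * (1 + x ^ 2)⁻¹ := by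
    rw [hμ]
    exact setIntegral_congr_fun measurableSet_Ioi (fun x hx => h_inner2 x hx)
  rw [← hR, ← hswap, hL]

/-- For every Hurst index `H ∈ (0,1)`, the improper integral
`∫₀^∞ (1 − cos t) · t^(−2H−1) dt` converges and equals
`π / (4·H·Γ(2H)·sin(πH))`. -/
theorem fbm_normalizing_constant (H : ℝ) (hH : H ∈ Set.Ioo (0 : ℝ) 1) :
    IntegrableOn (fun t : ℝ => (1 - Real.cos t) * t ^ (-2 * H - 1)) (Set.Ioi 0) volume ∧
    ∫ t in Set.Ioi (0 : ℝ), (1 - Real.cos t) * t ^ (-2 * H - 1) =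
      π / (4 * H * Real.Gamma (2 * H) * Real.sin (π * H)) := by
  obtain ⟨h0, h1⟩ := hH
  refine ⟨aux_integrable h0 h1, ?_⟩
  set μ := volume.restrict (Set.Ioi (0:ℝ)) with hμ
  set f : ℝ → ℝ → ℝ := fun t x => (1 - Real.cos t) * (x ^ (2*H) * rexp (-(t * x))) with hf
  have h_sect : ∀ t : ℝ, 0 < t → Integrable (fun x => f t x) μ := by
    intro t ht
    have := (integrableOn_rpow_mul_exp_neg_mul_rpow
      (show (-1:ℝ) < 2*H by linarith) zero_lt_one ht).const_mul (1 - Real.cos t)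
    simpa [hf, neg_mul, Real.rpow_one] using this
  have h_inner : ∀ t : ℝ, 0 < t →
      ∫ x, f t x ∂μ = Real.Gamma (2*H+1) * ((1 - Real.cos t) * t ^ (-2 * H - 1)) := by
    intro t ht
    have hint := integral_rpow_mul_exp_neg_mul_rpow (show (0:ℝ) < 1 by norm_num)
      (show (-1:ℝ) < 2*H by linarith) ht
    simp only [neg_mul, Real.rpow_one, div_one] at hint
    rw [hf]
    simp only
    rw [MeasureTheory.integral_const_mul, hμ, hint,
      show (-(2*H+1) : ℝ) = -2*H-1 by ring]
    ring
  have h_norm_int : Integrable (fun t => ∫ x, ‖f t x‖ ∂μ) μ := by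
    refine (((aux_integrable h0 h1).const_mul (Real.Gamma (2*H+1))).congr ?_)
    rw [hμ]
    filter_upwards [ae_restrict_mem measurableSet_Ioi] with t ht
    have h1c : (0:ℝ) ≤ 1 - Real.cos t := by nlinarith [Real.cos_le_one t]
    have heq : ∫ x, ‖f t x‖ ∂μ = ∫ x, f t x ∂μ := by
      rw [hμ]
      refine setIntegral_congr_fun measurableSet_Ioi (fun x hx => ?_)
      have hx0 : (0:ℝ) < x := hx
      exact Real.norm_of_nonneg (mul_nonneg h1c (by positivity))
    rw [heq, h_inner t ht]
  have hmeas : AEStronglyMeasurable (Function.uncurry f) (μ.prod μ) := by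
    apply Measurable.aestronglyMeasurable
    apply Measurable.mul (by fun_prop)
    apply Measurable.mul (by fun_prop)
    exact Real.measurable_exp.comp (measurable_fst.mul measurable_snd).neg
  have hprod : Integrable (Function.uncurry f) (μ.prod μ) := by
    rw [MeasureTheory.integrable_prod_iff hmeas]
    refine ⟨?_, h_norm_int⟩
    rw [hμ]
    filter_upwards [ae_restrict_mem measurableSet_Ioi] with t ht
    exact h_sect t ht
  have hswap := MeasureTheory.integral_integral_swap hprod
  have hL : ∫ t, ∫ x, f t x ∂μ ∂μ =
      Real.Gamma (2*H+1) * ∫ t in Set.Ioi (0:ℝ), (1 - Real.cos t) * t ^ (-2 * H - 1) := by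
    rw [hμ, setIntegral_congr_fun measurableSet_Ioi (fun t ht => h_inner t ht),
      MeasureTheory.integral_const_mul]
  have h_inner2 : ∀ x : ℝ, 0 < x →
      ∫ t, f t x ∂μ = x ^ (2*H-1) * (1 + x ^ 2)⁻¹ := by
    intro x hx
    have hre : ∀ t : ℝ, f t x = x ^ (2*H) * ((1 - Real.cos t) * rexp (-(t * x))) := by
      intro t; rw [hf]; ring
    rw [hμ, setIntegral_congr_fun measurableSet_Ioi (fun t _ => hre t),
      MeasureTheory.integral_const_mul, laplace_value hx]
    rw [show x ^ (2*H-1) = x ^ (2*H) * x⁻¹ by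
      rw [← Real.rpow_neg_one x, ← Real.rpow_add hx]; congr 1]
    field_simp
  have hR : ∫ x, ∫ t, f t x ∂μ ∂μ = Real.Gamma H * Real.Gamma (1-H) / 2 := by
    rw [hμ, setIntegral_congr_fun measurableSet_Ioi (fun x hx => h_inner2 x hx)]
    exact J_value h0 h1
  have key : Real.Gamma (2*H+1) * (∫ t in Set.Ioi (0:ℝ), (1 - Real.cos t) * t ^ (-2 * H - 1))
      = Real.Gamma H * Real.Gamma (1-H) / 2 := by rw [← hL, hswap, hR]
  have h2H : Real.Gamma (2*H+1) = 2*H*Real.Gamma (2*H) := by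
    rw [Real.Gamma_add_one (by positivity)]
  have hsin : Real.sin (π*H) > 0 :=
    Real.sin_pos_of_pos_of_lt_pi (by positivity) (by nlinarith [Real.pi_pos])
  have hrefl := Real.Gamma_mul_Gamma_one_sub H
  have hΓ : Real.Gamma (2*H) > 0 := Real.Gamma_pos_of_pos (by positivity)
  rw [h2H, hrefl, div_div, eq_div_iff (by positivity)] at key
  rw [eq_div_iff (by positivity)]
  linear_combination key
end

section
/- Let H ∈ (0,1), α ∈ (0, π/2], β ∈ ℝ and x ∈ ℝ². Then ∫_{C(β,α)} (1 − cos(x·ξ)) ‖ξ‖^{−2H−2} dξ = γ(H) · ∫_{β−α}^{β+α} |x·u(θ)|^{2H} dθ, where C(β,α) is the symmetric double cone of directions within angle α of β. (This is the polar-coordinate variogram formula v_{Y}(x) = γ(H) ∫ 1_{[−α,α]}(θ−β) |x·u(θ)|^{2H} dθ for the elementary field.) -/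
open MeasureTheory Real Set RealInnerProductSpace Filter Topology
open scoped ENNReal

noncomputable section

/-- The angle (argument) of a vector of `ℝ²`. -/
def arg2 (ξ : EuclideanSpace ℝ (Fin 2)) : ℝ :=
  Complex.arg ((ξ 0 : ℂ) + (ξ 1 : ℂ) * Complex.I)

/-- The symmetric double cone of directions within angle `α` of `β`. -/
def doubleCone (β α : ℝ) : Set (EuclideanSpace ℝ (Fin 2)) :=
  {ξ | ξ ≠ 0 ∧ ∃ k : ℤ, |arg2 ξ - β - k * π| ≤ α}

/-- The unit vector of angle `θ`. -/
def u (θ : ℝ) : EuclideanSpace ℝ (Fin 2) :=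
  WithLp.toLp 2 ![Real.cos θ, Real.sin θ]

/-- The normalizing constant `γ(H)`. -/
def gammaH (H : ℝ) : ℝ := π / (2 * H * Real.Gamma (2 * H) * Real.sin (H * π))




noncomputable section

lemma integrableOn_one_sub_cos_exp {u : ℝ} (hu : 0 < u) :
    IntegrableOn (fun r => (1 - Real.cos r) * Real.exp (-(u * r))) (Ioi 0) := by
  refine ((exp_neg_integrableOn_Ioi 0 hu).const_mul 2).mono'
    (Continuous.aestronglyMeasurable (by continuity)) ?_
  filter_upwards with r
  have h1 : |1 - Real.cos r| ≤ 2 := by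
    have := Real.neg_one_le_cos r
    have := Real.cos_le_one r
    rw [abs_le]; constructor <;> linarith
  have h2 : (0:ℝ) < Real.exp (-(u*r)) := Real.exp_pos _
  have : ‖(1 - Real.cos r) * Real.exp (-(u * r))‖ = |1 - Real.cos r| * Real.exp (-(u*r)) := by
    rw [norm_mul, Real.norm_eq_abs, Real.norm_eq_abs, abs_of_pos h2]
  rw [this, neg_mul]
  nlinarith

lemma hasDerivAt_exp_neg_mul (u r : ℝ) :
    HasDerivAt (fun r => Real.exp (-(u*r))) (Real.exp (-(u*r)) * -u) r := by
  have hf : HasDerivAt (fun r : ℝ => -(u*r)) (-u) r := by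
    refine ((hasDerivAt_id r).const_mul u).neg.congr_deriv ?_
    simp
  exact hf.exp

lemma integral_one_sub_cos_exp {u : ℝ} (hu : 0 < u) :
    ∫ r in Ioi 0, (1 - Real.cos r) * Real.exp (-(u * r)) = 1/u - u/(1+u^2) := by
  set G : ℝ → ℝ := fun r => -Real.exp (-(u*r))/u
    - Real.exp (-(u*r)) * (Real.sin r - u * Real.cos r)/(1+u^2) with hG
  have hu2 : (0:ℝ) < 1 + u^2 := by positivity
  have hd : ∀ r ∈ Ici (0:ℝ), HasDerivAt G ((1 - Real.cos r) * Real.exp (-(u * r))) r := by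
    intro r _
    have he := hasDerivAt_exp_neg_mul u r
    have h1 : HasDerivAt (fun r => -Real.exp (-(u*r))/u) (Real.exp (-(u*r))) r := by
      have := (he.neg).div_const u
      refine this.congr_deriv ?_
      field_simp
    have h2 := (he.mul ((Real.hasDerivAt_sin r).sub ((Real.hasDerivAt_cos r).const_mul u))).div_const (1+u^2)
    have h3 := h1.sub h2
    refine h3.congr_deriv ?_
    simp only [Pi.sub_apply]
    field_simp
    ring
  have hlim : Tendsto G atTop (𝓝 0) := by
    have hexp : Tendsto (fun r : ℝ => Real.exp (-(u*r))) atTop (𝓝 0) := by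
      have h1 : Tendsto (fun r : ℝ => u * r) atTop atTop := tendsto_id.const_mul_atTop hu
      exact Real.tendsto_exp_neg_atTop_nhds_zero.comp h1
    have hC : Tendsto (fun r : ℝ => (1/u + (1+u)/(1+u^2)) * Real.exp (-(u*r))) atTop (𝓝 0) := by
      simpa using hexp.const_mul (1/u + (1+u)/(1+u^2))
    refine squeeze_zero_norm (fun r => ?_) hC
    have he : (0:ℝ) < Real.exp (-(u*r)) := Real.exp_pos _
    have hb : |Real.sin r - u * Real.cos r| ≤ 1 + u := by
      calc |Real.sin r - u * Real.cos r| ≤ |Real.sin r| + |u * Real.cos r| := abs_sub _ _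
        _ ≤ 1 + u := by
            have := abs_sin_le_one r
            have := abs_cos_le_one r
            have : |u * Real.cos r| = u * |Real.cos r| := by
              rw [abs_mul, abs_of_pos hu]
            nlinarith [abs_sin_le_one r, abs_cos_le_one r]
    calc ‖G r‖ ≤ |(-Real.exp (-(u*r))/u)| + |Real.exp (-(u*r)) * (Real.sin r - u * Real.cos r)/(1+u^2)| := abs_sub _ _
      _ = Real.exp (-(u*r))/u + Real.exp (-(u*r)) * |Real.sin r - u * Real.cos r|/(1+u^2) := by
          rw [abs_div, abs_div, abs_neg, abs_of_pos he, abs_of_pos hu, abs_mul, abs_of_pos he, abs_of_pos hu2]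
      _ ≤ (1/u + (1+u)/(1+u^2)) * Real.exp (-(u*r)) := by
          rw [add_mul]
          have h1 : Real.exp (-(u*r))/u = 1/u * Real.exp (-(u*r)) := by ring
          have h2 : Real.exp (-(u*r)) * |Real.sin r - u * Real.cos r|/(1+u^2) ≤ (1+u)/(1+u^2) * Real.exp (-(u*r)) := by
            rw [show (1+u)/(1+u^2) * Real.exp (-(u*r)) = Real.exp (-(u*r)) * (1+u)/(1+u^2) by ring]
            gcongr
          linarith [h1.le, h2]
  have := integral_Ioi_of_hasDerivAt_of_tendsto' hd (integrableOn_one_sub_cos_exp hu) hlim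
  rw [this, hG]
  simp only [mul_zero, neg_zero, Real.exp_zero, Real.sin_zero, Real.cos_zero]
  field_simp
  ring

end



noncomputable section

lemma beta_integral_Ioo {H : ℝ} (hH : H ∈ Set.Ioo (0:ℝ) 1) :
    ∫ t in Ioo (0:ℝ) 1, t ^ (H - 1) * (1 - t) ^ (-H) = π / Real.sin (π * H) := by
  have h0 : (0:ℝ) < H := hH.1
  have h1 : H < 1 := hH.2
  have key : Complex.betaIntegral H (1 - H)
      = ((∫ t in Ioo (0:ℝ) 1, t ^ (H - 1) * (1 - t) ^ (-H) : ℝ) : ℂ) := by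
    rw [Complex.betaIntegral, intervalIntegral.integral_of_le zero_le_one]
    have e1 : ∫ x in Ioc (0:ℝ) 1, (x:ℂ) ^ ((H:ℂ) - 1) * (1 - (x:ℂ)) ^ ((1:ℂ) - H - 1)
        = ∫ x in Ioc (0:ℝ) 1, ((x ^ (H - 1) * (1 - x) ^ (-H) : ℝ) : ℂ) := by
      refine setIntegral_congr_fun measurableSet_Ioc fun t ht => ?_
      have ht0 : (0:ℝ) ≤ t := le_of_lt ht.1
      have ht1 : (0:ℝ) ≤ 1 - t := by linarith [ht.2]
      have hexp1 : ((H:ℂ) - 1) = ((H - 1 : ℝ) : ℂ) := by push_cast; ring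
      have hexp2 : ((1:ℂ) - (H:ℂ) - 1) = ((-H : ℝ) : ℂ) := by push_cast; ring
      have hbase : (1 : ℂ) - (t:ℂ) = ((1 - t : ℝ) : ℂ) := by push_cast; ring
      rw [hexp1, hexp2, hbase, ← Complex.ofReal_cpow ht0, ← Complex.ofReal_cpow ht1,
        ← Complex.ofReal_mul]
    rw [e1, MeasureTheory.integral_Ioc_eq_integral_Ioo]
    exact integral_ofReal
  have hbeta : Complex.betaIntegral H (1 - H)
      = ((Real.Gamma H * Real.Gamma (1 - H) : ℝ) : ℂ) := by
    have hu : 0 < (H:ℂ).re := by simpa using h0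
    have hv : 0 < ((1:ℂ) - (H:ℂ)).re := by
      simp only [Complex.sub_re, Complex.one_re, Complex.ofReal_re]; linarith
    have := Complex.Gamma_mul_Gamma_eq_betaIntegral hu hv
    rw [show (H:ℂ) + ((1:ℂ) - H) = 1 by ring, Complex.Gamma_one, one_mul] at this
    rw [← this, show (1:ℂ) - (H:ℂ) = ((1 - H : ℝ) : ℂ) by push_cast; ring,
      Complex.Gamma_ofReal, Complex.Gamma_ofReal, ← Complex.ofReal_mul]
  have hre : (∫ t in Ioo (0:ℝ) 1, t ^ (H - 1) * (1 - t) ^ (-H))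
      = Real.Gamma H * Real.Gamma (1 - H) := by exact_mod_cast key.symm.trans hbeta
  rw [hre, Real.Gamma_mul_Gamma_one_sub]

lemma integral_M {H : ℝ} (hH : H ∈ Set.Ioo (0:ℝ) 1) :
    ∫ v in Ioi (0:ℝ), v ^ (H - 1) / (1 + v) = π / Real.sin (π * H) := by
  have h0 : (0:ℝ) < H := hH.1
  set s : Set ℝ := Ioo (0:ℝ) 1
  set f : ℝ → ℝ := fun t => t / (1 - t) with hf
  set f' : ℝ → ℝ := fun t => (1 - t)⁻¹ ^ 2 with hf'
  have hderiv : ∀ t ∈ s, HasDerivWithinAt f (f' t) s t := by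
    intro t ht
    have hne : (1:ℝ) - t ≠ 0 := sub_ne_zero.mpr (ne_of_lt ht.2).symm
    have h := ((hasDerivAt_id t).div ((hasDerivAt_const t (1:ℝ)).sub (hasDerivAt_id t)) hne)
    refine HasDerivAt.hasDerivWithinAt ?_
    refine h.congr_deriv ?_
    simp only [hf', id_eq, Pi.sub_apply]
    field_simp
    ring
  have hinj : InjOn f s := by
    intro a ha b hb hab
    have ha2 : (1:ℝ) - a ≠ 0 := sub_ne_zero.mpr (ne_of_lt ha.2).symm
    have hb2 : (1:ℝ) - b ≠ 0 := sub_ne_zero.mpr (ne_of_lt hb.2).symm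
    simp only [hf] at hab
    field_simp at hab
    ring_nf at hab
    linarith
  have himg : f '' s = Ioi (0:ℝ) := by
    ext y
    constructor
    · rintro ⟨t, ht, rfl⟩
      exact div_pos ht.1 (by linarith [ht.2])
    · intro hy
      have hy' := mem_Ioi.mp hy
      refine ⟨y / (1 + y), ⟨div_pos hy' (by linarith), ?_⟩, ?_⟩
      · rw [div_lt_one (by linarith)]; linarith
      · have h1y : (1:ℝ) + y ≠ 0 := by positivity
        simp only [hf]
        rw [eq_comm]
        field_simp
        ring
  have himage := MeasureTheory.integral_image_eq_integral_abs_deriv_smul measurableSet_Ioo hderiv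
    hinj (fun v => v ^ (H - 1) / (1 + v))
  rw [himg] at himage
  rw [himage, ← beta_integral_Ioo hH]
  refine setIntegral_congr_fun measurableSet_Ioo fun t ht => ?_
  have ht0 : (0:ℝ) < t := ht.1
  have ht1 : (0:ℝ) < 1 - t := by linarith [ht.2]
  have hfx : (1:ℝ) + t / (1 - t) = (1 - t)⁻¹ := by field_simp; ring
  have hdiv : (t / (1 - t)) ^ (H - 1) = t ^ (H - 1) / (1 - t) ^ (H - 1) :=
    Real.div_rpow ht0.le ht1.le _
  have hnegH : (1 - t) ^ (-H) = ((1 - t) ^ (H - 1))⁻¹ * (1 - t)⁻¹ := by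
    rw [← Real.rpow_neg ht1.le, ← Real.rpow_neg_one (1 - t), ← Real.rpow_add ht1]
    congr 1
    ring
  have hpow_ne : (1 - t) ^ (H - 1) ≠ 0 := (Real.rpow_pos_of_pos ht1 _).ne'
  simp only [hf, hf', smul_eq_mul]
  rw [abs_of_nonneg (by positivity), hfx, hdiv, hnegH]
  field_simp

lemma integrableOn_K {H : ℝ} (hH : H ∈ Set.Ioo (0:ℝ) 1) :
    IntegrableOn (fun u : ℝ => u ^ (2*H - 1) / (1 + u^2)) (Ioi 0) := by
  have h0 : (0:ℝ) < H := hH.1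
  have h1 : H < 1 := hH.2
  have hmeas : ∀ S : Set ℝ, MeasurableSet S → S ⊆ Ioi 0 →
      AEStronglyMeasurable (fun u : ℝ => u ^ (2*H - 1) / (1 + u^2)) (volume.restrict S) := by
    intro S hS hsub
    refine ContinuousOn.aestronglyMeasurable ?_ hS
    refine ContinuousOn.div ?_ (by fun_prop) ?_
    · exact fun x hx => (Real.continuousAt_rpow_const x _ (Or.inl (ne_of_gt (hsub hx)))).continuousWithinAt
    · intro x _; positivity
  rw [← Ioc_union_Ioi_eq_Ioi (zero_le_one : (0:ℝ) ≤ 1), integrableOn_union]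
  constructor
  · have hint : IntegrableOn (fun u : ℝ => u ^ (2*H - 1)) (Ioc 0 1) := by
      have := intervalIntegral.intervalIntegrable_rpow' (a := 0) (b := 1) (r := 2*H-1) (by linarith)
      rwa [intervalIntegrable_iff_integrableOn_Ioc_of_le zero_le_one] at this
    refine hint.mono' (hmeas _ measurableSet_Ioc (Ioc_subset_Ioi_self)) ?_
    rw [ae_restrict_iff' measurableSet_Ioc]
    filter_upwards with u hu
    have hu0 : (0:ℝ) < u := hu.1
    have hp : (0:ℝ) < u ^ (2*H - 1) := Real.rpow_pos_of_pos hu0 _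
    rw [Real.norm_eq_abs, abs_div, abs_of_pos hp, abs_of_pos (by positivity : (0:ℝ) < 1 + u^2)]
    rw [div_le_iff₀ (by positivity)]
    nlinarith [sq_nonneg u]
  · have hint : IntegrableOn (fun u : ℝ => u ^ (2*H - 3)) (Ioi 1) :=
      integrableOn_Ioi_rpow_of_lt (by linarith) zero_lt_one
    refine hint.mono' (hmeas _ measurableSet_Ioi (Ioi_subset_Ioi zero_le_one)) ?_
    rw [ae_restrict_iff' measurableSet_Ioi]
    filter_upwards with u hu
    have hu1 : (1:ℝ) < u := hu
    have hu0 : (0:ℝ) < u := by linarith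
    have hp : (0:ℝ) < u ^ (2*H - 1) := Real.rpow_pos_of_pos hu0 _
    rw [Real.norm_eq_abs, abs_div, abs_of_pos hp, abs_of_pos (by positivity : (0:ℝ) < 1 + u^2)]
    rw [div_le_iff₀ (by positivity)]
    have : u ^ (2*H - 3) * u^2 = u ^ (2*H - 1) := by
      rw [← Real.rpow_natCast u 2, ← Real.rpow_add hu0]
      congr 1
      push_cast
      ring
    nlinarith [Real.rpow_pos_of_pos hu0 (2*H-3)]
  
lemma integral_K {H : ℝ} (hH : H ∈ Set.Ioo (0:ℝ) 1) :
    ∫ u in Ioi (0:ℝ), u ^ (2*H - 1) / (1 + u^2) = π / (2 * Real.sin (π * H)) := by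
  have h0 : (0:ℝ) < H := hH.1
  have hsub := MeasureTheory.integral_comp_rpow_Ioi (fun v => v ^ (H - 1) / (1 + v))
    (p := 2) two_ne_zero
  rw [integral_M hH] at hsub
  have congr1 : ∫ x in Ioi (0:ℝ), (|(2:ℝ)| * x ^ ((2:ℝ) - 1)) • ((x ^ (2:ℝ)) ^ (H - 1) / (1 + x ^ (2:ℝ)))
      = ∫ x in Ioi (0:ℝ), 2 * (x ^ (2*H - 1) / (1 + x^2)) := by
    refine setIntegral_congr_fun measurableSet_Ioi fun x hx => ?_
    have hx0 : (0:ℝ) < x := hx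
    have e1 : (x:ℝ) ^ (2:ℝ) = x ^ 2 := by
      rw [← Real.rpow_natCast x 2]; norm_num
    have e2 : (x ^ (2:ℝ)) ^ (H - 1) = x ^ (2*H - 2) := by
      rw [← Real.rpow_mul hx0.le]; congr 1; ring
    have e3 : (x:ℝ) ^ ((2:ℝ) - 1) = x := by
      norm_num
    have e4 : x * x ^ (2*H - 2) = x ^ (2*H - 1) := by
      nth_rewrite 1 [← Real.rpow_one x]
      rw [← Real.rpow_add hx0]; congr 1; ring
    rw [smul_eq_mul, e2, e1, e3, abs_two, ← e4]
    ring
  rw [congr1] at hsub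
  rw [MeasureTheory.integral_const_mul] at hsub
  have hsin : 0 < Real.sin (π * H) := Real.sin_pos_of_pos_of_lt_pi (by positivity)
    (by rw [mul_comm]; exact (mul_lt_iff_lt_one_left Real.pi_pos).mpr hH.2)
  field_simp at hsub ⊢
  linarith

end




noncomputable section

-- placeholders for p1/p2 results

lemma lintegral_J {H : ℝ} (hH : H ∈ Set.Ioo (0:ℝ) 1) :
    ∫⁻ r in Ioi (0:ℝ), ENNReal.ofReal ((1 - Real.cos r) * r ^ (-2*H - 1))
      = ENNReal.ofReal (π / (2 * Real.sin (π * H) * Real.Gamma (2*H + 1))) := by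
  have h0 : (0:ℝ) < H := hH.1
  have h1 : H < 1 := hH.2
  have hΓ : 0 < Real.Gamma (2*H + 1) := Real.Gamma_pos_of_pos (by linarith)
  set f : ℝ → ℝ → ℝ≥0∞ :=
    fun r u => ENNReal.ofReal ((1 - Real.cos r) * (u ^ (2*H) * Real.exp (-(r*u)))) with hfdef
  have hmeas : Measurable (Function.uncurry f) := by
    apply Measurable.ennreal_ofReal
    fun_prop
  -- u-side
  have hu_side : ∀ r ∈ Ioi (0:ℝ), ∫⁻ u in Ioi (0:ℝ), f r u
      = ENNReal.ofReal (Real.Gamma (2*H+1) * ((1 - Real.cos r) * r ^ (-2*H - 1))) := by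
    intro r hr
    have hr0 : (0:ℝ) < r := hr
    have hcn : (0:ℝ) ≤ 1 - Real.cos r := by linarith [Real.cos_le_one r]
    have hint : IntegrableOn (fun u : ℝ => u ^ (2*H) * Real.exp (-(r*u))) (Ioi 0) := by
      have := integrableOn_rpow_mul_exp_neg_mul_rpow (p := 1) (s := 2*H) (b := r)
        (by linarith) zero_lt_one hr0
      refine this.congr_fun (fun u hu => ?_) measurableSet_Ioi
      simp only [Real.rpow_one, neg_mul]
    have hval : ∫ u in Ioi (0:ℝ), u ^ (2*H) * Real.exp (-(r*u))
        = (1/r) ^ (2*H+1) * Real.Gamma (2*H+1) := by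
      rw [← Real.integral_rpow_mul_exp_neg_mul_Ioi (by linarith : (0:ℝ) < 2*H+1) hr0]
      refine setIntegral_congr_fun measurableSet_Ioi fun u hu => ?_
      norm_num
    calc ∫⁻ u in Ioi (0:ℝ), f r u
        = ∫⁻ u in Ioi (0:ℝ), ENNReal.ofReal (1 - Real.cos r)
            * ENNReal.ofReal (u ^ (2*H) * Real.exp (-(r*u))) := by
          simp_rw [hfdef, ENNReal.ofReal_mul hcn]
      _ = ENNReal.ofReal (1 - Real.cos r)
            * ∫⁻ u in Ioi (0:ℝ), ENNReal.ofReal (u ^ (2*H) * Real.exp (-(r*u))) :=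
          lintegral_const_mul' _ _ ENNReal.ofReal_ne_top
      _ = ENNReal.ofReal (1 - Real.cos r)
            * ENNReal.ofReal ((1/r) ^ (2*H+1) * Real.Gamma (2*H+1)) := by
          rw [← hval, ← ofReal_integral_eq_lintegral_ofReal hint]
          filter_upwards [ae_restrict_mem measurableSet_Ioi] with u hu
          have hu0 : (0:ℝ) < u := hu
          have := Real.exp_pos (-(r*u))
          simp only [Pi.zero_apply]
          positivity
      _ = ENNReal.ofReal (Real.Gamma (2*H+1) * ((1 - Real.cos r) * r ^ (-2*H - 1))) := by
          rw [← ENNReal.ofReal_mul hcn]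
          congr 1
          have : (1/r) ^ (2*H+1) = r ^ (-2*H - 1) := by
            rw [one_div, ← Real.rpow_neg_one r, ← Real.rpow_mul hr0.le]
            congr 1; ring
          rw [this]; ring
  -- r-side
  have hr_side : ∀ u ∈ Ioi (0:ℝ), ∫⁻ r in Ioi (0:ℝ), f r u
      = ENNReal.ofReal (u ^ (2*H - 1) / (1 + u^2)) := by
    intro u hu
    have hu0 : (0:ℝ) < u := hu
    have hp : (0:ℝ) ≤ u ^ (2*H) := Real.rpow_nonneg hu0.le _
    calc ∫⁻ r in Ioi (0:ℝ), f r u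
        = ∫⁻ r in Ioi (0:ℝ), ENNReal.ofReal (u ^ (2*H))
            * ENNReal.ofReal ((1 - Real.cos r) * Real.exp (-(u*r))) := by
          refine lintegral_congr fun r => ?_
          rw [← ENNReal.ofReal_mul hp]
          simp only [hfdef]
          congr 1
          rw [mul_comm r u]
          ring
      _ = ENNReal.ofReal (u ^ (2*H))
            * ∫⁻ r in Ioi (0:ℝ), ENNReal.ofReal ((1 - Real.cos r) * Real.exp (-(u*r))) :=
          lintegral_const_mul' _ _ ENNReal.ofReal_ne_top
      _ = ENNReal.ofReal (u ^ (2*H)) * ENNReal.ofReal (1/u - u/(1+u^2)) := by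
          rw [← integral_one_sub_cos_exp hu0,
            ← ofReal_integral_eq_lintegral_ofReal (integrableOn_one_sub_cos_exp hu0)]
          filter_upwards with r
          simp only [Pi.zero_apply]
          exact mul_nonneg (by linarith [Real.cos_le_one r]) (Real.exp_pos _).le
      _ = ENNReal.ofReal (u ^ (2*H - 1) / (1 + u^2)) := by
          rw [← ENNReal.ofReal_mul hp]
          congr 1
          have h2 : u ^ (2*H) = u ^ (2*H - 1) * u := by
            have h2' := Real.rpow_add hu0 (2*H-1) 1
            rw [Real.rpow_one, show 2*H-1+1 = 2*H by ring] at h2'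
            exact h2'
          have hu2 : (0:ℝ) < 1 + u^2 := by positivity
          rw [h2]
          field_simp
          ring
  have hswap : ∫⁻ r in Ioi (0:ℝ), ∫⁻ u in Ioi (0:ℝ), f r u
      = ∫⁻ u in Ioi (0:ℝ), ∫⁻ r in Ioi (0:ℝ), f r u :=
    lintegral_lintegral_swap (hmeas.aemeasurable)
  have hA : ∫⁻ r in Ioi (0:ℝ), ∫⁻ u in Ioi (0:ℝ), f r u
      = ENNReal.ofReal (Real.Gamma (2*H+1))
        * ∫⁻ r in Ioi (0:ℝ), ENNReal.ofReal ((1 - Real.cos r) * r ^ (-2*H - 1)) := by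
    rw [← lintegral_const_mul' _ _ ENNReal.ofReal_ne_top]
    rw [setLIntegral_congr_fun_ae measurableSet_Ioi (Filter.Eventually.of_forall hu_side)]
    refine setLIntegral_congr_fun_ae measurableSet_Ioi (Filter.Eventually.of_forall fun r hr => ?_)
    have hcn : (0:ℝ) ≤ 1 - Real.cos r := by linarith [Real.cos_le_one r]
    rw [← ENNReal.ofReal_mul hΓ.le]
  have hB : ∫⁻ u in Ioi (0:ℝ), ∫⁻ r in Ioi (0:ℝ), f r u
      = ENNReal.ofReal (π / (2 * Real.sin (π * H))) := by
    rw [setLIntegral_congr_fun_ae measurableSet_Ioi (Filter.Eventually.of_forall hr_side)]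
    rw [← integral_K hH, ← ofReal_integral_eq_lintegral_ofReal (integrableOn_K hH)]
    filter_upwards [ae_restrict_mem measurableSet_Ioi] with u hu
    have hu0 : (0:ℝ) < u := hu
    simp only [Pi.zero_apply]
    positivity
  have heq : ENNReal.ofReal (Real.Gamma (2*H+1))
        * ∫⁻ r in Ioi (0:ℝ), ENNReal.ofReal ((1 - Real.cos r) * r ^ (-2*H - 1))
      = ENNReal.ofReal (Real.Gamma (2*H+1))
        * ENNReal.ofReal (π / (2 * Real.sin (π * H) * Real.Gamma (2*H + 1))) := by
    rw [← hA, hswap, hB, ← ENNReal.ofReal_mul hΓ.le]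
    congr 1
    have hsin : 0 < Real.sin (π * H) := Real.sin_pos_of_pos_of_lt_pi (by positivity)
      (by rw [mul_comm]; exact (mul_lt_iff_lt_one_left Real.pi_pos).mpr h1)
    field_simp
  have hne : ENNReal.ofReal (Real.Gamma (2*H+1)) ≠ 0 := by
    simp [ENNReal.ofReal_eq_zero, not_le, hΓ]
  have := congrArg (fun z => (ENNReal.ofReal (Real.Gamma (2*H+1)))⁻¹ * z) heq
  simpa [← mul_assoc, ENNReal.inv_mul_cancel hne ENNReal.ofReal_ne_top, one_mul] using this

end

section part4
variable {H : ℝ}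

lemma nonneg_J_integrand (H : ℝ) (t : ℝ) :
    ∀ᵐ r ∂(volume.restrict (Ioi (0:ℝ))), 0 ≤ (1 - Real.cos (t*r)) * r ^ (-2*H - 1) := by
  filter_upwards [ae_restrict_mem measurableSet_Ioi] with r hr
  have hr0 : (0:ℝ) < r := hr
  exact mul_nonneg (by linarith [Real.cos_le_one (t*r)]) (Real.rpow_nonneg hr0.le _)

lemma meas_J_integrand (H : ℝ) :
    Measurable (fun r : ℝ => (1 - Real.cos r) * r ^ (-2*H - 1)) := by fun_prop

lemma integrableOn_J (hH : H ∈ Set.Ioo (0:ℝ) 1) :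
    IntegrableOn (fun r : ℝ => (1 - Real.cos r) * r ^ (-2*H - 1)) (Ioi 0) := by
  have h := nonneg_J_integrand H 1
  simp only [one_mul] at h
  refine ⟨(meas_J_integrand H).aestronglyMeasurable, ?_⟩
  rw [hasFiniteIntegral_iff_ofReal h, lintegral_J hH]
  exact ENNReal.ofReal_lt_top

lemma integral_J (hH : H ∈ Set.Ioo (0:ℝ) 1) :
    ∫ r in Ioi (0:ℝ), (1 - Real.cos r) * r ^ (-2*H - 1)
      = π / (2 * Real.sin (π * H) * Real.Gamma (2*H + 1)) := by
  have h0 : (0:ℝ) < H := hH.1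
  have hΓ : 0 < Real.Gamma (2*H + 1) := Real.Gamma_pos_of_pos (by linarith)
  have hsin : 0 < Real.sin (π * H) := Real.sin_pos_of_pos_of_lt_pi (by positivity)
    (by rw [mul_comm]; exact (mul_lt_iff_lt_one_left Real.pi_pos).mpr hH.2)
  have h := nonneg_J_integrand H 1
  simp only [one_mul] at h
  rw [integral_eq_lintegral_of_nonneg_ae h (meas_J_integrand H).aestronglyMeasurable]
  rw [lintegral_J hH, ENNReal.toReal_ofReal (by positivity)]

lemma radial_integrableOn (hH : H ∈ Set.Ioo (0:ℝ) 1) (t : ℝ) :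
    IntegrableOn (fun r : ℝ => (1 - Real.cos (t*r)) * r ^ (-2*H - 1)) (Ioi 0) := by
  rcases eq_or_ne t 0 with rfl | ht
  · have : (fun r : ℝ => (1 - Real.cos (0*r)) * r ^ (-2*H - 1)) = fun _ => (0:ℝ) := by
      funext r; simp
    rw [this]
    exact integrableOn_zero
  · set T := |t| with hT
    have ht0 : (0:ℝ) < T := abs_pos.mpr ht
    have hcos : ∀ r : ℝ, Real.cos (t*r) = Real.cos (T*r) := by
      intro r
      rcases abs_cases t with ⟨h1, _⟩ | ⟨h1, _⟩
      · rw [hT, h1]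
      · rw [hT, h1, show -t*r = -(t*r) by ring, Real.cos_neg]
    have hbase : IntegrableOn (fun r : ℝ => (1 - Real.cos (T*r)) * (T*r) ^ (-2*H - 1))
        (Ioi 0) := by
      have h2 := (integrableOn_Ioi_comp_mul_left_iff
        (fun y : ℝ => (1 - Real.cos y) * y ^ (-2*H - 1)) 0 ht0).mpr
      rw [mul_zero] at h2
      exact h2 (integrableOn_J hH)
    refine IntegrableOn.congr_fun ((hbase.const_mul (T ^ (2*H+1))) : IntegrableOn _ _ _)
      (fun r hr => ?_) measurableSet_Ioi
    have hr0 : (0:ℝ) < r := hr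
    have hTT : T ^ (2*H+1) * T ^ (-2*H-1) = 1 := by
      rw [← Real.rpow_add ht0]; norm_num
    rw [Real.mul_rpow ht0.le hr0.le, hcos r]
    linear_combination (1 - Real.cos (T*r)) * r ^ (-2*H-1) * hTT

lemma radial_integral (hH : H ∈ Set.Ioo (0:ℝ) 1) (t : ℝ) :
    ∫ r in Ioi (0:ℝ), (1 - Real.cos (t*r)) * r ^ (-2*H - 1)
      = (π / (2 * Real.sin (π * H) * Real.Gamma (2*H + 1))) * |t| ^ (2*H) := by
  have h0 : (0:ℝ) < H := hH.1
  rcases eq_or_ne t 0 with rfl | ht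
  · have : (fun r : ℝ => (1 - Real.cos (0*r)) * r ^ (-2*H - 1)) = fun _ => (0:ℝ) := by
      funext r; simp
    rw [this, abs_zero, Real.zero_rpow (by positivity), mul_zero]
    simp
  · have ht0 : (0:ℝ) < |t| := abs_pos.mpr ht
    set T := |t| with hT
    have hcos : ∀ r : ℝ, Real.cos (t*r) = Real.cos (T*r) := by
      intro r
      rcases abs_cases t with ⟨h1, _⟩ | ⟨h1, _⟩
      · rw [hT, h1]
      · rw [hT, h1, show -t*r = -(t*r) by ring, Real.cos_neg]
    have key := MeasureTheory.integral_comp_mul_left_Ioi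
      (fun y : ℝ => (1 - Real.cos y) * y ^ (-2*H - 1)) 0 ht0
    rw [mul_zero, integral_J hH, smul_eq_mul] at key
    have congr1 : ∫ x in Ioi (0:ℝ), (1 - Real.cos (T*x)) * (T*x) ^ (-2*H - 1)
        = T ^ (-2*H-1) * ∫ x in Ioi (0:ℝ), (1 - Real.cos (t*x)) * x ^ (-2*H - 1) := by
      rw [← integral_const_mul]
      refine setIntegral_congr_fun measurableSet_Ioi fun x hx => ?_
      have hx0 : (0:ℝ) < x := hx
      rw [Real.mul_rpow ht0.le hx0.le, hcos x]
      ring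
    rw [congr1] at key
    have hTne : T ^ (-2*H-1) ≠ 0 := (Real.rpow_pos_of_pos ht0 _).ne'
    have hsolve : ∫ x in Ioi (0:ℝ), (1 - Real.cos (t*x)) * x ^ (-2*H - 1)
        = (T ^ (-2*H-1))⁻¹ * (T⁻¹ * (π / (2 * Real.sin (π * H) * Real.Gamma (2*H + 1)))) := by
      rw [← key, inv_mul_cancel_left₀ hTne]
    rw [hsolve]
    have hfin : (T ^ (-2*H-1))⁻¹ * T⁻¹ = T ^ (2*H) := by
      rw [← Real.rpow_neg ht0.le, ← Real.rpow_neg_one T, ← Real.rpow_add ht0]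
      congr 1; ring
    rw [show (T ^ (-2*H-1))⁻¹ * (T⁻¹ * (π / (2 * Real.sin (π * H) * Real.Gamma (2*H + 1))))
      = ((T ^ (-2*H-1))⁻¹ * T⁻¹) * (π / (2 * Real.sin (π * H) * Real.Gamma (2*H + 1))) by ring,
      hfin]
    ring

end part4



noncomputable section


abbrev E2 := EuclideanSpace ℝ (Fin 2)

def e2 : E2 ≃ᵐ (ℝ × ℝ) :=
  (MeasurableEquiv.toLp 2 (Fin 2 → ℝ)).symm.trans (MeasurableEquiv.finTwoArrow)

lemma e2_symm_apply (q : ℝ × ℝ) : (e2.symm q) 0 = q.1 ∧ (e2.symm q) 1 = q.2 := by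
  constructor <;> rfl

lemma e2_measurePreserving : MeasurePreserving e2 (volume : Measure E2) volume :=
  (EuclideanSpace.volume_preserving_symm_measurableEquiv_toLp (Fin 2)).trans
    (volume_preserving_finTwoArrow ℝ)

lemma inner_e2 (x : E2) (q : ℝ × ℝ) : ⟪x, e2.symm q⟫ = x 0 * q.1 + x 1 * q.2 := by
  rw [PiLp.inner_apply]
  simp [Fin.sum_univ_two, e2_symm_apply q, RCLike.inner_apply]
  ring

lemma norm_e2 (q : ℝ × ℝ) : ‖e2.symm q‖ = Real.sqrt (q.1^2 + q.2^2) := by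
  rw [EuclideanSpace.norm_eq]
  simp [Fin.sum_univ_two, (e2_symm_apply q).1, (e2_symm_apply q).2, Real.norm_eq_abs, sq_abs]

lemma inner_u (x : E2) (θ : ℝ) : ⟪x, u θ⟫ = x 0 * Real.cos θ + x 1 * Real.sin θ := by
  rw [PiLp.inner_apply]
  simp [Fin.sum_univ_two, u, RCLike.inner_apply]
  ring

lemma norm_u (θ : ℝ) : ‖u θ‖ = 1 := by
  rw [EuclideanSpace.norm_eq]
  simp [Fin.sum_univ_two, u, Real.norm_eq_abs, sq_abs]


def Sang (β α : ℝ) : Set ℝ := {θ : ℝ | ∃ k : ℤ, |θ - β - k * π| ≤ α}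

lemma measurableSet_Sang (β α : ℝ) : MeasurableSet (Sang β α) := by
  have : Sang β α = ⋃ k : ℤ, {θ : ℝ | |θ - β - k * π| ≤ α} := by
    ext θ; simp [Sang]
  rw [this]
  refine MeasurableSet.iUnion fun k => ?_
  have : {θ : ℝ | |θ - β - k * π| ≤ α} = Icc (β + k*π - α) (β + k*π + α) := by
    ext θ; rw [mem_Icc, mem_setOf_eq, abs_le]; constructor <;> (intro h; constructor <;> linarith [h.1, h.2])
  rw [this]
  exact measurableSet_Icc

lemma measurable_arg2 : Measurable arg2 := by
  apply Complex.measurable_arg.comp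
  fun_prop

lemma measurableSet_doubleCone (β α : ℝ) : MeasurableSet (doubleCone β α) := by
  have : doubleCone β α = {ξ : E2 | ξ ≠ 0} ∩ (arg2 ⁻¹' (Sang β α)) := by
    ext ξ; simp [doubleCone, Sang]
  rw [this]
  exact (measurableSet_singleton (0:E2)).compl.inter
    (measurableSet_Sang β α |>.preimage measurable_arg2)

lemma e2_polar_mem_iff {β α : ℝ} {r θ : ℝ} (hr : 0 < r) (hθ : θ ∈ Ioo (-π) π) :
    e2.symm (r * Real.cos θ, r * Real.sin θ) ∈ doubleCone β α ↔ θ ∈ Sang β α := by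
  set ξ := e2.symm (r * Real.cos θ, r * Real.sin θ) with hξ
  have hnorm : ‖ξ‖ = r := by
    rw [hξ, norm_e2]
    have : (r * Real.cos θ)^2 + (r * Real.sin θ)^2 = r^2 := by
      nlinarith [Real.sin_sq_add_cos_sq θ]
    rw [this, Real.sqrt_sq hr.le]
  have hne : ξ ≠ 0 := by
    intro h
    rw [h, norm_zero] at hnorm
    exact hr.ne hnorm
  have harg : arg2 ξ = θ := by
    rw [arg2, hξ, (e2_symm_apply _).1, (e2_symm_apply _).2]
    have : ((r * Real.cos θ : ℝ) : ℂ) + ((r * Real.sin θ : ℝ) : ℂ) * Complex.I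
        = (r : ℂ) * (Real.cos θ + Real.sin θ * Complex.I) := by
      push_cast; ring
    rw [this, Complex.ofReal_cos, Complex.ofReal_sin]
    exact Complex.arg_mul_cos_add_sin_mul_I hr ⟨hθ.1, hθ.2.le⟩
  constructor
  · rintro ⟨-, k, hk⟩
    exact ⟨k, by rwa [harg] at hk⟩
  · rintro ⟨k, hk⟩
    exact ⟨hne, k, by rwa [harg]⟩

end

noncomputable section

variable {H β α : ℝ}

def Gfun (x : E2) (H β α : ℝ) : ℝ × ℝ → ℝ :=
  (Prod.snd ⁻¹' Sang β α).indicator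
    (fun p => (1 - Real.cos (⟪x, u p.2⟫ * p.1)) * p.1 ^ (-2*H - 1))

lemma polar_step (x : E2) :
    ∫ ξ in doubleCone β α, (1 - Real.cos ⟪x, ξ⟫) * ‖ξ‖ ^ (-2*H - 2)
      = ∫ p in polarCoord.target, Gfun x H β α p := by
  rw [← integral_indicator (measurableSet_doubleCone β α)]
  rw [← (e2_measurePreserving.symm e2).integral_comp e2.symm.measurableEmbedding]
  rw [← integral_comp_polarCoord_symm]
  refine setIntegral_congr_fun polarCoord.open_target.measurableSet fun p hp => ?_
  rw [polarCoord_target] at hp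
  obtain ⟨hr, hθ⟩ := hp
  have hr0 : (0:ℝ) < p.1 := hr
  have hps : polarCoord.symm p = (p.1 * Real.cos p.2, p.1 * Real.sin p.2) := rfl
  rw [hps]
  by_cases hmem : p.2 ∈ Sang β α
  · rw [Gfun, Set.indicator_of_mem ((e2_polar_mem_iff hr0 hθ).mpr hmem),
      Set.indicator_of_mem (by exact hmem)]
    have hinner : ⟪x, e2.symm (p.1 * Real.cos p.2, p.1 * Real.sin p.2)⟫
        = ⟪x, u p.2⟫ * p.1 := by
      rw [inner_e2, inner_u]
      ring
    have hnorm : ‖e2.symm (p.1 * Real.cos p.2, p.1 * Real.sin p.2)‖ = p.1 := by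
      rw [norm_e2]
      have : (p.1 * Real.cos p.2)^2 + (p.1 * Real.sin p.2)^2 = p.1^2 := by
        nlinarith [Real.sin_sq_add_cos_sq p.2]
      rw [this, Real.sqrt_sq hr0.le]
    rw [hinner, hnorm, smul_eq_mul]
    have hrr : p.1 * p.1 ^ (-2*H - 2) = p.1 ^ (-2*H - 1) := by
      have h' := Real.rpow_add hr0 (-2*H-2) 1
      rw [Real.rpow_one, show -2*H-2+1 = -2*H-1 by ring] at h'
      rw [h']; ring
    rw [← hrr]; ring
  · rw [Gfun, Set.indicator_of_notMem ((e2_polar_mem_iff hr0 hθ).not.mpr hmem),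
      Set.indicator_of_notMem (by exact hmem), smul_zero]

end

noncomputable section




variable {H β α : ℝ}

def cfun (x : E2) (H : ℝ) : ℝ → ℝ :=
  fun θ => (π / (2 * Real.sin (π * H) * Real.Gamma (2*H + 1))) * |⟪x, u θ⟫| ^ (2*H)

lemma measurable_cfun (x : E2) : Measurable (cfun x H) := by
  unfold cfun
  simp_rw [inner_u]
  fun_prop

lemma measurable_Gfun (x : E2) : Measurable (Gfun x H β α) := by
  unfold Gfun
  refine Measurable.indicator ?_ (measurable_snd (measurableSet_Sang β α))
  simp_rw [inner_u]
  fun_prop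

lemma fubini_step (hH : H ∈ Set.Ioo (0:ℝ) 1) (hα : α ∈ Set.Ioc (0:ℝ) (π/2)) (x : E2) :
    ∫ p in polarCoord.target, Gfun x H β α p
      = ∫ θ in Ioo (-π) π, (Sang β α).indicator (cfun x H) θ := by
  have h0 : (0:ℝ) < H := hH.1
  have hΓ : 0 < Real.Gamma (2*H + 1) := Real.Gamma_pos_of_pos (by linarith)
  have hsin : 0 < Real.sin (π * H) := Real.sin_pos_of_pos_of_lt_pi (by positivity)
    (by rw [mul_comm]; exact (mul_lt_iff_lt_one_left Real.pi_pos).mpr hH.2)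
  have hprod : (volume : Measure (ℝ × ℝ)).restrict polarCoord.target
      = (volume.restrict (Ioi 0)).prod (volume.restrict (Ioo (-π) π)) := by
    rw [polarCoord_target, Measure.prod_restrict, ← Measure.volume_eq_prod]
  -- sections in r
  have hsec : ∀ θ : ℝ, (fun r => Gfun x H β α (r, θ))
      = (Sang β α).indicator (fun _ => fun r : ℝ => (1 - Real.cos (⟪x, u θ⟫ * r)) * r ^ (-2*H - 1)) θ := by
    intro θ
    by_cases hmem : θ ∈ Sang β α
    · rw [Set.indicator_of_mem hmem]
      funext r
      rw [Gfun, Set.indicator_of_mem (by exact hmem)]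
    · rw [Set.indicator_of_notMem hmem]
      funext r
      rw [Gfun, Set.indicator_of_notMem (by exact hmem)]
      rfl
  have hsec_int : ∀ θ : ℝ, Integrable (fun r => Gfun x H β α (r, θ)) (volume.restrict (Ioi 0)) := by
    intro θ
    rw [hsec θ]
    by_cases hmem : θ ∈ Sang β α
    · rw [Set.indicator_of_mem hmem]
      exact radial_integrableOn hH ⟪x, u θ⟫
    · rw [Set.indicator_of_notMem hmem]
      exact integrable_zero _ _ _
  have hsec_val : ∀ θ : ℝ, ∫ r in Ioi (0:ℝ), Gfun x H β α (r, θ)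
      = (Sang β α).indicator (cfun x H) θ := by
    intro θ
    rw [hsec θ]
    by_cases hmem : θ ∈ Sang β α
    · rw [Set.indicator_of_mem hmem, Set.indicator_of_mem hmem]
      rw [show (fun r : ℝ => (1 - Real.cos (⟪x, u θ⟫ * r)) * r ^ (-2*H - 1))
        = fun r : ℝ => (1 - Real.cos (⟪x, u θ⟫ * r)) * r ^ (-2*H - 1) from rfl]
      exact radial_integral hH ⟪x, u θ⟫
    · rw [Set.indicator_of_notMem hmem, Set.indicator_of_notMem hmem]
      simp
  have hnonneg : ∀ θ : ℝ, ∀ r ∈ Ioi (0:ℝ), 0 ≤ Gfun x H β α (r, θ) := by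
    intro θ r hr
    have hr0 : (0:ℝ) < r := hr
    rw [Gfun]
    by_cases hmem : θ ∈ Sang β α
    · rw [Set.indicator_of_mem (by exact hmem)]
      exact mul_nonneg (by simp only; linarith [Real.cos_le_one (⟪x, u θ⟫ * r)])
        (Real.rpow_nonneg hr0.le _)
    · rw [Set.indicator_of_notMem (by exact hmem)]
  -- integrability on the product
  have hintG : Integrable (Gfun x H β α)
      ((volume.restrict (Ioi 0)).prod (volume.restrict (Ioo (-π) π))) := by
    rw [integrable_prod_iff' (measurable_Gfun x).aestronglyMeasurable]
    constructor
    · exact Eventually.of_forall fun θ => hsec_int θ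
    · have heq : (fun θ => ∫ r in Ioi (0:ℝ), ‖Gfun x H β α (r, θ)‖)
          = fun θ => (Sang β α).indicator (cfun x H) θ := by
        funext θ
        rw [← hsec_val θ]
        refine integral_congr_ae ?_
        filter_upwards [ae_restrict_mem measurableSet_Ioi] with r hr
        exact norm_of_nonneg (hnonneg θ r hr)
      rw [heq]
      refine Measure.integrableOn_of_bounded (M := (π / (2 * Real.sin (π * H) * Real.Gamma (2*H + 1))) * ‖x‖ ^ (2*H)) ?_ ?_ ?_
      · exact (measure_Ioo_lt_top).ne
      · exact ((measurable_cfun x).indicator (measurableSet_Sang β α)).aestronglyMeasurable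
      · filter_upwards with θ
        have hJc : 0 ≤ π / (2 * Real.sin (π * H) * Real.Gamma (2*H + 1)) := by positivity
        have hc_nonneg : 0 ≤ cfun x H θ := mul_nonneg hJc (Real.rpow_nonneg (abs_nonneg _) _)
        have hbound : cfun x H θ ≤ (π / (2 * Real.sin (π * H) * Real.Gamma (2*H + 1))) * ‖x‖ ^ (2*H) := by
          refine mul_le_mul_of_nonneg_left ?_ hJc
          refine Real.rpow_le_rpow (abs_nonneg _) ?_ (by linarith)
          calc |⟪x, u θ⟫| ≤ ‖x‖ * ‖u θ‖ := abs_real_inner_le_norm x (u θ)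
            _ = ‖x‖ := by rw [norm_u, mul_one]
        by_cases hmem : θ ∈ Sang β α
        · rw [Set.indicator_of_mem hmem, norm_of_nonneg hc_nonneg]
          exact hbound
        · rw [Set.indicator_of_notMem hmem, norm_zero]
          positivity
  rw [hprod, integral_prod_symm _ hintG]
  refine setIntegral_congr_fun measurableSet_Ioo fun θ _ => ?_
  exact hsec_val θ

end

noncomputable section


variable {H β α : ℝ}

lemma Sang_add_pi (β α θ : ℝ) : θ + π ∈ Sang β α ↔ θ ∈ Sang β α := by
  constructor
  · rintro ⟨k, hk⟩
    refine ⟨k - 1, ?_⟩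
    have e : θ - β - ((k:ℤ) - 1 : ℤ) * π = θ + π - β - k * π := by push_cast; ring
    rwa [e]
  · rintro ⟨k, hk⟩
    refine ⟨k + 1, ?_⟩
    have e : θ + π - β - ((k:ℤ) + 1 : ℤ) * π = θ - β - k * π := by push_cast; ring
    rwa [e]

lemma cfun_add_pi (x : E2) (θ : ℝ) : cfun x H (θ + π) = cfun x H θ := by
  unfold cfun
  congr 1
  simp_rw [inner_u, Real.cos_add_pi, Real.sin_add_pi]
  rw [show x 0 * -Real.cos θ + x 1 * -Real.sin θ = -(x 0 * Real.cos θ + x 1 * Real.sin θ) by ring,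
    abs_neg]

lemma not_mem_Sang (hα : α ∈ Set.Ioc (0:ℝ) (π/2)) {θ : ℝ}
    (h1 : β - π/2 < θ) (h2 : θ < β + π/2) (h3 : α < |θ - β|) : θ ∉ Sang β α := by
  rintro ⟨k, hk⟩
  have hπ := Real.pi_pos
  have habs := abs_le.mp hk
  have hα2 := hα.2
  rcases lt_trichotomy k 0 with hk0 | hk0 | hk0
  · have hk1 : (k:ℝ) ≤ -1 := by exact_mod_cast (by omega : k ≤ -1)
    have : (k:ℝ) * π ≤ -π := by nlinarith
    have habs2 : -π/2 < θ - β := by linarith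
    linarith [habs.2]
  · subst hk0
    simp only [Int.cast_zero, zero_mul, sub_zero] at hk
    linarith [abs_le.mp hk |>.1, abs_le.mp hk |>.2, h3, abs_le.mpr ⟨(abs_le.mp hk).1, (abs_le.mp hk).2⟩]
  · have hk1 : (1:ℝ) ≤ (k:ℝ) := by exact_mod_cast (by omega : 1 ≤ k)
    have : π ≤ (k:ℝ) * π := by nlinarith
    have habs2 : θ - β < π/2 := by linarith
    linarith [habs.1]

lemma mem_Sang_of_close {θ : ℝ} (h : |θ - β| ≤ α) : θ ∈ Sang β α :=
  ⟨0, by simpa using h⟩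

lemma angular_step (hα : α ∈ Set.Ioc (0:ℝ) (π/2)) (x : E2) (hH : H ∈ Set.Ioo (0:ℝ) 1) :
    ∫ θ in Ioo (-π) π, (Sang β α).indicator (cfun x H) θ
      = 2 * ∫ θ in (β-α)..(β+α), cfun x H θ := by
  have hπ := Real.pi_pos
  have h0 : (0:ℝ) < H := hH.1
  have hΓ : 0 < Real.Gamma (2*H + 1) := Real.Gamma_pos_of_pos (by linarith)
  have hsin : 0 < Real.sin (π * H) := Real.sin_pos_of_pos_of_lt_pi (by positivity)
    (by rw [mul_comm]; exact (mul_lt_iff_lt_one_left Real.pi_pos).mpr hH.2)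
  set c := cfun x H with hc
  set h := (Sang β α).indicator c with hh
  have hJc : 0 ≤ π / (2 * Real.sin (π * H) * Real.Gamma (2*H + 1)) := by positivity
  have hbdd : ∀ θ, ‖c θ‖ ≤ (π / (2 * Real.sin (π * H) * Real.Gamma (2*H + 1))) * ‖x‖ ^ (2*H) := by
    intro θ
    have hc_nonneg : 0 ≤ c θ := mul_nonneg hJc (Real.rpow_nonneg (abs_nonneg _) _)
    rw [norm_of_nonneg hc_nonneg]
    refine mul_le_mul_of_nonneg_left ?_ hJc
    refine Real.rpow_le_rpow (abs_nonneg _) ?_ (by linarith)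
    calc |⟪x, u θ⟫| ≤ ‖x‖ * ‖u θ‖ := abs_real_inner_le_norm x (u θ)
      _ = ‖x‖ := by rw [norm_u, mul_one]
  have hbddh : ∀ θ, ‖h θ‖ ≤ (π / (2 * Real.sin (π * H) * Real.Gamma (2*H + 1))) * ‖x‖ ^ (2*H) := by
    intro θ
    by_cases hmem : θ ∈ Sang β α
    · rw [hh, Set.indicator_of_mem hmem]; exact hbdd θ
    · rw [hh, Set.indicator_of_notMem hmem, norm_zero]; positivity
  have hii : ∀ a b : ℝ, IntervalIntegrable h volume a b := by
    intro a b
    rw [intervalIntegrable_iff]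
    refine Measure.integrableOn_of_bounded ?_ ?_ (Filter.Eventually.of_forall fun θ => hbddh θ)
    · exact measure_Ioc_lt_top.ne
    · exact (((measurable_cfun x).indicator (measurableSet_Sang β α))).aestronglyMeasurable
  have hci : ∀ a b : ℝ, IntervalIntegrable c volume a b := by
    intro a b
    rw [intervalIntegrable_iff]
    refine Measure.integrableOn_of_bounded ?_ ?_ (Filter.Eventually.of_forall fun θ => hbdd θ)
    · exact measure_Ioc_lt_top.ne
    · exact (measurable_cfun x).aestronglyMeasurable
  have hper : Function.Periodic h π := by
    intro θ
    rw [hh]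
    by_cases hmem : θ ∈ Sang β α
    · rw [Set.indicator_of_mem hmem, Set.indicator_of_mem ((Sang_add_pi β α θ).mpr hmem)]
      exact cfun_add_pi x θ
    · rw [Set.indicator_of_notMem hmem,
        Set.indicator_of_notMem ((Sang_add_pi β α θ).not.mpr hmem)]
  have e0 : ∫ θ in Ioo (-π) π, h θ = ∫ θ in (-π)..π, h θ := by
    rw [intervalIntegral.integral_of_le (by linarith), MeasureTheory.integral_Ioc_eq_integral_Ioo]
  have esplit : ∫ θ in (-π)..π, h θ = (∫ θ in (-π)..(0:ℝ), h θ) + ∫ θ in (0:ℝ)..π, h θ :=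
    (intervalIntegral.integral_add_adjacent_intervals (hii _ _) (hii _ _)).symm
  have e1 : ∫ θ in (-π)..(0:ℝ), h θ = ∫ θ in (β-π/2)..(β-π/2+π), h θ := by
    have := hper.intervalIntegral_add_eq (-π) (β-π/2)
    simpa using this
  have e2 : ∫ θ in (0:ℝ)..π, h θ = ∫ θ in (β-π/2)..(β-π/2+π), h θ := by
    have := hper.intervalIntegral_add_eq 0 (β-π/2)
    simpa using this
  have hα0 := hα.1
  have hα2 := hα.2
  have ewin : ∫ θ in (β-π/2)..(β-π/2+π), h θ = ∫ θ in (β-α)..(β+α), c θ := by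
    rw [show β-π/2+π = β+π/2 by ring]
    rw [← intervalIntegral.integral_add_adjacent_intervals (a := β-π/2) (b := β-α) (c := β+π/2)
      (hii _ _) (hii _ _),
      ← intervalIntegral.integral_add_adjacent_intervals (a := β-α) (b := β+α) (c := β+π/2)
      (hii _ _) (hii _ _)]
    have hleft : ∫ θ in (β-π/2)..(β-α), h θ = 0 := by
      rw [intervalIntegral.integral_of_le (by linarith), MeasureTheory.integral_Ioc_eq_integral_Ioo]
      rw [setIntegral_congr_fun measurableSet_Ioo (g := fun _ => (0:ℝ)) ?_, integral_zero]
      intro θ hθ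
      have h3 : α < |θ - β| := by
        have : θ - β < -α := by linarith [hθ.2]
        calc α < β - θ := by linarith [hθ.2]
          _ ≤ |θ - β| := by rw [abs_sub_comm]; exact le_abs_self _
      exact Set.indicator_of_notMem (not_mem_Sang hα (by linarith [hθ.1]) (by linarith [hθ.2]) h3) _
    have hright : ∫ θ in (β+α)..(β+π/2), h θ = 0 := by
      rw [intervalIntegral.integral_of_le (by linarith), MeasureTheory.integral_Ioc_eq_integral_Ioo]
      rw [setIntegral_congr_fun measurableSet_Ioo (g := fun _ => (0:ℝ)) ?_, integral_zero]
      intro θ hθ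
      have h3 : α < |θ - β| := by
        calc α < θ - β := by linarith [hθ.1]
          _ ≤ |θ - β| := le_abs_self _
      exact Set.indicator_of_notMem (not_mem_Sang hα (by linarith [hθ.1]) (by linarith [hθ.2]) h3) _
    have hmid : ∫ θ in (β-α)..(β+α), h θ = ∫ θ in (β-α)..(β+α), c θ := by
      rw [intervalIntegral.integral_of_le (by linarith), MeasureTheory.integral_Ioc_eq_integral_Ioo,
        intervalIntegral.integral_of_le (by linarith), MeasureTheory.integral_Ioc_eq_integral_Ioo]
      refine setIntegral_congr_fun measurableSet_Ioo fun θ hθ => ?_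
      refine Set.indicator_of_mem (mem_Sang_of_close (abs_le.mpr ⟨?_, ?_⟩)) _
      · linarith [hθ.1]
      · linarith [hθ.2]
    rw [hleft, hmid, hright]
    ring
  rw [e0, esplit, e1, e2, ewin]
  ring

end

/-- Polar-coordinate variogram formula for the elementary field: for
`H ∈ (0,1)`, `α ∈ (0, π/2]`, `β ∈ ℝ` and `x ∈ ℝ²`,
`∫_{C(β,α)} (1 − cos(x·ξ)) ‖ξ‖^(−2H−2) dξ = γ(H) ∫_{β−α}^{β+α} |x·u(θ)|^(2H) dθ`. -/
theorem elementary_field_variogram_polar (H : ℝ) (hH : H ∈ Set.Ioo (0 : ℝ) 1)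
    (α : ℝ) (hα : α ∈ Set.Ioc (0 : ℝ) (π / 2)) (β : ℝ)
    (x : EuclideanSpace ℝ (Fin 2)) :
    ∫ ξ in doubleCone β α, (1 - Real.cos ⟪x, ξ⟫) * ‖ξ‖ ^ (-2 * H - 2) =
      gammaH H * ∫ θ in (β - α)..(β + α), |⟪x, u θ⟫| ^ (2 * H) := by
  have h0 : (0:ℝ) < H := hH.1
  have hΓ : 0 < Real.Gamma (2*H) := Real.Gamma_pos_of_pos (by linarith)
  have hsin : 0 < Real.sin (π * H) := Real.sin_pos_of_pos_of_lt_pi (by positivity)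
    (by rw [mul_comm]; exact (mul_lt_iff_lt_one_left Real.pi_pos).mpr hH.2)
  rw [polar_step x, fubini_step hH hα x, angular_step hα x hH]
  unfold cfun
  rw [intervalIntegral.integral_const_mul, ← mul_assoc]
  congr 1
  rw [gammaH, Real.Gamma_add_one (by positivity : 2*H ≠ 0), show H * π = π * H by ring]
  field_simp

end
end
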